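/- arXiv:2503.05657 — 5 statements merged into one kernel-verified Lean document; each statement's English description precedes it below -/
import Mathlib

section
/- Let E be a real inner product space, let L : E → ℝ be continuously differentiable with gradient ∇L, and let θ : [0,∞) → E solve the gradient flow θ'(t) = −∇L(θ(t)) for all t ≥ 0. If δ : E → ℝ is Lipschitz with constant K, then for every t ≥ 0 one has (δ(θ(t)) − δ(θ(0)))² ≤ t · K² · (L(θ(0)) − L(θ(t))). Equivalently, whenever K > 0 and L(θ(0)) > L(θ(t)), the time t satisfies t ≥ (δ(θ(t)) − δ(θ(0)))² / (K² · |L(θ(0)) − L(θ(t))|). -/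
open MeasureTheory intervalIntegral Set

/-- Cauchy–Schwarz for interval integrals of a nonneg continuous function:
`(∫₀ᵗ f)² ≤ t · ∫₀ᵗ f²`. -/
lemma sq_intervalIntegral_le {t : ℝ} (ht : 0 ≤ t) (f : ℝ → ℝ)
    (hfc : ContinuousOn f (Set.Icc 0 t)) (hfnn : ∀ s, 0 ≤ f s) :
    (∫ s in (0:ℝ)..t, f s) ^ 2 ≤ t * ∫ s in (0:ℝ)..t, (f s) ^ 2 := by
  set μ : Measure ℝ := volume.restrict (Set.Ioc 0 t) with hμ
  haveI : IsFiniteMeasure μ := by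
    constructor
    rw [hμ, Measure.restrict_apply_univ, Real.volume_Ioc]
    exact ENNReal.ofReal_lt_top
  have hmeas : AEStronglyMeasurable f μ :=
    (hfc.mono Set.Ioc_subset_Icc_self).aestronglyMeasurable measurableSet_Ioc
  obtain ⟨C, hC⟩ := isCompact_Icc.exists_bound_of_continuousOn hfc
  have hbound : ∀ᵐ s ∂μ, ‖f s‖ ≤ C := by
    rw [hμ, ae_restrict_iff' measurableSet_Ioc]
    exact Filter.Eventually.of_forall fun s hs => hC s (Set.Ioc_subset_Icc_self hs)
  have hf2 : MemLp f (ENNReal.ofReal 2) μ := MemLp.of_bound hmeas C hbound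
  have hg2 : MemLp (fun _ : ℝ => (1:ℝ)) (ENNReal.ofReal 2) μ := memLp_const 1
  have hpq : Real.HolderConjugate 2 2 := ⟨by norm_num, by norm_num, by norm_num⟩
  have hCS := integral_mul_le_Lp_mul_Lq_of_nonneg hpq
    (Filter.Eventually.of_forall fun s => hfnn s)
    (Filter.Eventually.of_forall fun _ => zero_le_one) hf2 hg2
  have hμt : (μ Set.univ).toReal = t := by
    rw [hμ, Measure.restrict_apply_univ, Real.volume_Ioc]
    simp [ht]
  have hInn : 0 ≤ ∫ s, (f s) ^ 2 ∂μ := integral_nonneg fun s => sq_nonneg _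
  have hJnn : 0 ≤ ∫ s, f s ∂μ := integral_nonneg fun s => hfnn s
  have key : ∫ s, f s ∂μ ≤ (∫ s, (f s) ^ 2 ∂μ) ^ ((1:ℝ)/2) * t ^ ((1:ℝ)/2) := by
    have h1 : ∫ s, f s * 1 ∂μ = ∫ s, f s ∂μ := by simp
    have h2 : ∫ s, f s ^ (2:ℝ) ∂μ = ∫ s, (f s) ^ 2 ∂μ := by
      refine integral_congr_ae (Filter.Eventually.of_forall fun s => ?_)
      show f s ^ (2:ℝ) = f s ^ (2:ℕ)
      rw [show ((2:ℝ) = ((2:ℕ):ℝ)) by norm_num, Real.rpow_natCast]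
    have h3 : ∫ _ : ℝ, (1:ℝ) ^ (2:ℝ) ∂μ = t := by
      simp [Measure.real_def, hμt]
    rw [h1, h2, h3] at hCS
    exact hCS
  have hsq : (∫ s, f s ∂μ) ^ 2 ≤ (∫ s, (f s) ^ 2 ∂μ) * t := by
    calc (∫ s, f s ∂μ) ^ 2
        ≤ ((∫ s, (f s) ^ 2 ∂μ) ^ ((1:ℝ)/2) * t ^ ((1:ℝ)/2)) ^ 2 := by
          apply pow_le_pow_left₀ hJnn key
      _ = (∫ s, (f s) ^ 2 ∂μ) * t := by
          rw [mul_pow, ← Real.rpow_natCast ((∫ s, (f s) ^ 2 ∂μ) ^ ((1:ℝ)/2)) 2,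
            ← Real.rpow_natCast (t ^ ((1:ℝ)/2)) 2,
            ← Real.rpow_mul hInn, ← Real.rpow_mul ht]
          norm_num
  have e1 : ∫ s in (0:ℝ)..t, f s = ∫ s, f s ∂μ := intervalIntegral.integral_of_le ht
  have e2 : ∫ s in (0:ℝ)..t, (f s) ^ 2 = ∫ s, (f s) ^ 2 ∂μ :=
    intervalIntegral.integral_of_le ht
  rw [e1, e2]
  linarith [hsq]

/-- Deterministic (Σ ≡ 0) unlearning-time lower bound: along a gradient flow of `L`,
a `K`-Lipschitz functional `δ` satisfies
`(δ(θ t) − δ(θ 0))² ≤ t · K² · (L(θ 0) − L(θ t))`, equivalently a lower bound for `t`. -/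
theorem unlearning_time_lower_bound
    {E : Type*} [NormedAddCommGroup E] [InnerProductSpace ℝ E] [CompleteSpace E]
    (L : E → ℝ) (hL : ContDiff ℝ 1 L)
    (θ : ℝ → E) (hθ : ∀ t, 0 ≤ t → HasDerivAt θ (-(gradient L (θ t))) t)
    (δ : E → ℝ) (K : ℝ) (hK : 0 ≤ K)
    (hδ : ∀ x y, |δ x - δ y| ≤ K * ‖x - y‖) :
    ∀ t, 0 ≤ t →
      (δ (θ t) - δ (θ 0)) ^ 2 ≤ t * K ^ 2 * (L (θ 0) - L (θ t)) ∧
        (0 < K → L (θ t) < L (θ 0) →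
          (δ (θ t) - δ (θ 0)) ^ 2 / (K ^ 2 * |L (θ 0) - L (θ t)|) ≤ t) := by
  intro t ht
  -- continuity of the gradient
  have hgradc : Continuous (fun x : E => gradient L x) := by
    have h1 : Continuous (fderiv ℝ L) := hL.continuous_fderiv one_ne_zero
    exact (InnerProductSpace.toDual ℝ E).symm.continuous.comp h1
  -- continuity of θ on [0, ∞)
  have hθc : ContinuousOn θ (Set.Ici 0) := fun s hs =>
    ((hθ s hs).continuousAt).continuousWithinAt
  have hθct : ContinuousOn θ (Set.Icc 0 t) := hθc.mono Set.Icc_subset_Ici_self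
  set f : ℝ → ℝ := fun s => ‖gradient L (θ s)‖ with hf
  have hfc : ContinuousOn f (Set.Icc 0 t) :=
    (hgradc.comp_continuousOn hθct).norm
  have hfnn : ∀ s, 0 ≤ f s := fun s => norm_nonneg _
  -- FTC for θ
  have hFTCθ : θ t - θ 0 = ∫ s in (0:ℝ)..t, -(gradient L (θ s)) := by
    refine (intervalIntegral.integral_eq_sub_of_hasDerivAt ?_ ?_).symm
    · intro s hs
      rw [Set.uIcc_of_le ht] at hs
      exact hθ s hs.1
    · apply ContinuousOn.intervalIntegrable
      rw [Set.uIcc_of_le ht]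
      exact (hgradc.comp_continuousOn hθct).neg
  -- derivative of L ∘ θ
  have hder : ∀ s ∈ Set.uIcc (0:ℝ) t,
      HasDerivAt (fun u => L (θ u)) (-(f s) ^ 2) s := by
    intro s hs
    rw [Set.uIcc_of_le ht] at hs
    have h1 : HasFDerivAt L (fderiv ℝ L (θ s)) (θ s) :=
      (hL.differentiable one_ne_zero (θ s)).hasFDerivAt
    have h2 : HasDerivAt (fun u => L (θ u)) _ s := h1.comp_hasDerivAt s (hθ s hs.1)
    convert h2 using 1
    have hfd : fderiv ℝ L (θ s) = InnerProductSpace.toDual ℝ E (gradient L (θ s)) := by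
      simp [gradient]
    rw [hfd]
    simp only [InnerProductSpace.toDual_apply_apply, hf]
    rw [inner_neg_right, real_inner_self_eq_norm_sq]
  -- FTC for L ∘ θ
  have hFTCL : L (θ t) - L (θ 0) = ∫ s in (0:ℝ)..t, -(f s) ^ 2 := by
    refine (intervalIntegral.integral_eq_sub_of_hasDerivAt hder ?_).symm
    apply ContinuousOn.intervalIntegrable
    rw [Set.uIcc_of_le ht]
    exact ((hfc.pow 2).neg)
  have hLsub : L (θ 0) - L (θ t) = ∫ s in (0:ℝ)..t, (f s) ^ 2 := by
    have : ∫ s in (0:ℝ)..t, -(f s) ^ 2 = -∫ s in (0:ℝ)..t, (f s) ^ 2 := by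
      simpa using intervalIntegral.integral_neg (f := fun s => (f s) ^ 2)
    rw [this] at hFTCL
    linarith
  -- bound on displacement
  have hdisp : ‖θ t - θ 0‖ ≤ ∫ s in (0:ℝ)..t, f s := by
    rw [hFTCθ]
    calc ‖∫ s in (0:ℝ)..t, -(gradient L (θ s))‖
        ≤ ∫ s in (0:ℝ)..t, ‖-(gradient L (θ s))‖ :=
          intervalIntegral.norm_integral_le_integral_norm ht
      _ = ∫ s in (0:ℝ)..t, f s := by simp [hf]
  have hJnn : 0 ≤ ∫ s in (0:ℝ)..t, f s :=
    intervalIntegral.integral_nonneg ht fun s _ => hfnn s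
  -- Cauchy–Schwarz
  have hCS : (∫ s in (0:ℝ)..t, f s) ^ 2 ≤ t * ∫ s in (0:ℝ)..t, (f s) ^ 2 :=
    sq_intervalIntegral_le ht f hfc hfnn
  -- main inequality
  have hmain : (δ (θ t) - δ (θ 0)) ^ 2 ≤ t * K ^ 2 * (L (θ 0) - L (θ t)) := by
    have h1 : (δ (θ t) - δ (θ 0)) ^ 2 ≤ (K * ‖θ t - θ 0‖) ^ 2 := by
      rw [← sq_abs (δ (θ t) - δ (θ 0))]
      exact pow_le_pow_left₀ (abs_nonneg _) (hδ (θ t) (θ 0)) 2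
    have h2 : (K * ‖θ t - θ 0‖) ^ 2 ≤ (K * ∫ s in (0:ℝ)..t, f s) ^ 2 := by
      apply pow_le_pow_left₀ (mul_nonneg hK (norm_nonneg _))
      exact mul_le_mul_of_nonneg_left hdisp hK
    have h3 : (K * ∫ s in (0:ℝ)..t, f s) ^ 2 = K ^ 2 * (∫ s in (0:ℝ)..t, f s) ^ 2 := by
      ring
    have h4 : K ^ 2 * (∫ s in (0:ℝ)..t, f s) ^ 2 ≤ K ^ 2 * (t * ∫ s in (0:ℝ)..t, (f s) ^ 2) :=
      mul_le_mul_of_nonneg_left hCS (sq_nonneg K)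
    rw [hLsub]
    nlinarith [h1, h2, h4]
  refine ⟨hmain, fun hKpos hLt => ?_⟩
  have habs : |L (θ 0) - L (θ t)| = L (θ 0) - L (θ t) := abs_of_pos (by linarith)
  rw [habs]
  rw [div_le_iff₀ (mul_pos (pow_pos hKpos 2) (by linarith))]
  calc (δ (θ t) - δ (θ 0)) ^ 2 ≤ t * K ^ 2 * (L (θ 0) - L (θ t)) := hmain
    _ = t * (K ^ 2 * (L (θ 0) - L (θ t))) := by ring
end

section
/- Let (Ω, P) be a probability space and let Y, Y' : Ω → ℝⁿ be random vectors such that ‖σ(Y)‖², ‖σ(−Y)‖² and ‖σ(Y')‖² are integrable, where σ(x) = max(x,0) is applied componentwise. If 𝔼|‖σ(Y)‖² − ‖σ(−Y)‖²| ≤ ε and 𝔼|‖σ(Y)‖² − ‖σ(Y')‖²| ≤ ε for some ε ≥ 0, then 𝔼‖σ(Y) − σ(−Y)‖² ≥ 𝔼‖σ(Y) − σ(Y')‖² − 2ε. -/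
open MeasureTheory

/-- Componentwise ReLU on `ℝⁿ` (Euclidean space). -/
noncomputable def reluVec {n : ℕ} (y : EuclideanSpace ℝ (Fin n)) : EuclideanSpace ℝ (Fin n) :=
  WithLp.toLp 2 (fun i => max (y i) 0)

lemma reluVec_inner_nonneg {n : ℕ} (y y' : EuclideanSpace ℝ (Fin n)) :
    0 ≤ (inner ℝ (reluVec y) (reluVec y') : ℝ) := by
  rw [PiLp.inner_apply]
  refine Finset.sum_nonneg fun i _ => ?_
  simp only [RCLike.inner_apply, starRingEnd_apply, star_trivial, reluVec, PiLp.toLp_apply]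
  positivity

lemma reluVec_inner_neg {n : ℕ} (y : EuclideanSpace ℝ (Fin n)) :
    (inner ℝ (reluVec y) (reluVec (-y)) : ℝ) = 0 := by
  rw [PiLp.inner_apply]
  refine Finset.sum_eq_zero fun i _ => ?_
  simp only [RCLike.inner_apply, starRingEnd_apply, star_trivial, reluVec, PiLp.toLp_apply]
  rcases le_or_gt (y i) 0 with h | h
  · have : max (y i) 0 = 0 := max_eq_right h
    simp [this]
  · have : max (-y i) 0 = 0 := max_eq_right (by simpa using h.le)
    simp [PiLp.neg_apply, this]

lemma norm_sub_reluVec_neg {n : ℕ} (y : EuclideanSpace ℝ (Fin n)) :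
    ‖reluVec y - reluVec (-y)‖ ^ 2 = ‖reluVec y‖ ^ 2 + ‖reluVec (-y)‖ ^ 2 := by
  have := norm_sub_sq_real (reluVec y) (reluVec (-y))
  rw [reluVec_inner_neg] at this
  linarith

lemma norm_sub_reluVec_le {n : ℕ} (y y' : EuclideanSpace ℝ (Fin n)) :
    ‖reluVec y - reluVec y'‖ ^ 2 ≤ ‖reluVec y‖ ^ 2 + ‖reluVec y'‖ ^ 2 := by
  have := norm_sub_sq_real (reluVec y) (reluVec y')
  have h := reluVec_inner_nonneg y y'
  linarith

/-- Theorem 2 of the paper: weight negation maximizes the expected change of post-ReLU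
activations up to error `2ε`. -/
theorem negation_maximizes_activation_change
    {Ω : Type*} [MeasurableSpace Ω] (P : Measure Ω) [IsProbabilityMeasure P]
    {n : ℕ} (Y Y' : Ω → EuclideanSpace ℝ (Fin n))
    (hY : Measurable Y) (hY' : Measurable Y')
    (ε : ℝ) (hε : 0 ≤ ε)
    (hint1 : Integrable (fun ω => ‖reluVec (Y ω)‖ ^ 2) P)
    (hint2 : Integrable (fun ω => ‖reluVec (-(Y ω))‖ ^ 2) P)
    (hint3 : Integrable (fun ω => ‖reluVec (Y' ω)‖ ^ 2) P)
    (h1 : ∫ ω, |‖reluVec (Y ω)‖ ^ 2 - ‖reluVec (-(Y ω))‖ ^ 2| ∂P ≤ ε)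
    (h2 : ∫ ω, |‖reluVec (Y ω)‖ ^ 2 - ‖reluVec (Y' ω)‖ ^ 2| ∂P ≤ ε) :
    ∫ ω, ‖reluVec (Y ω) - reluVec (-(Y ω))‖ ^ 2 ∂P
      ≥ (∫ ω, ‖reluVec (Y ω) - reluVec (Y' ω)‖ ^ 2 ∂P) - 2 * ε := by
  -- the LHS integral splits
  have hLHS : ∫ ω, ‖reluVec (Y ω) - reluVec (-(Y ω))‖ ^ 2 ∂P
      = (∫ ω, ‖reluVec (Y ω)‖ ^ 2 ∂P) + ∫ ω, ‖reluVec (-(Y ω))‖ ^ 2 ∂P := by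
    rw [← integral_add hint1 hint2]
    exact integral_congr_ae (Filter.Eventually.of_forall fun ω => norm_sub_reluVec_neg (Y ω))
  -- the middle integral bound
  have hMid : ∫ ω, ‖reluVec (Y ω) - reluVec (Y' ω)‖ ^ 2 ∂P
      ≤ (∫ ω, ‖reluVec (Y ω)‖ ^ 2 ∂P) + ∫ ω, ‖reluVec (Y' ω)‖ ^ 2 ∂P := by
    rw [← integral_add hint1 hint3]
    refine integral_mono_of_nonneg (Filter.Eventually.of_forall fun ω => by positivity)
      (hint1.add hint3)
      (Filter.Eventually.of_forall fun ω => norm_sub_reluVec_le (Y ω) (Y' ω))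
  -- from h1: ∫‖σY‖² - ∫‖σ(-Y)‖² ≤ ε
  have hA : (∫ ω, ‖reluVec (Y ω)‖ ^ 2 ∂P) - ∫ ω, ‖reluVec (-(Y ω))‖ ^ 2 ∂P ≤ ε := by
    calc (∫ ω, ‖reluVec (Y ω)‖ ^ 2 ∂P) - ∫ ω, ‖reluVec (-(Y ω))‖ ^ 2 ∂P
        = ∫ ω, (‖reluVec (Y ω)‖ ^ 2 - ‖reluVec (-(Y ω))‖ ^ 2) ∂P := (integral_sub hint1 hint2).symm
      _ ≤ ∫ ω, |‖reluVec (Y ω)‖ ^ 2 - ‖reluVec (-(Y ω))‖ ^ 2| ∂P :=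
          integral_mono (hint1.sub hint2) (hint1.sub hint2).abs fun ω => le_abs_self _
      _ ≤ ε := h1
  -- from h2: ∫‖σY'‖² - ∫‖σY‖² ≤ ε
  have hB : (∫ ω, ‖reluVec (Y' ω)‖ ^ 2 ∂P) - ∫ ω, ‖reluVec (Y ω)‖ ^ 2 ∂P ≤ ε := by
    calc (∫ ω, ‖reluVec (Y' ω)‖ ^ 2 ∂P) - ∫ ω, ‖reluVec (Y ω)‖ ^ 2 ∂P
        = ∫ ω, (‖reluVec (Y' ω)‖ ^ 2 - ‖reluVec (Y ω)‖ ^ 2) ∂P := (integral_sub hint3 hint1).symm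
      _ ≤ ∫ ω, |‖reluVec (Y ω)‖ ^ 2 - ‖reluVec (Y' ω)‖ ^ 2| ∂P :=
          integral_mono (hint3.sub hint1) (hint1.sub hint3).abs fun ω => by
            rw [abs_sub_comm]; exact le_abs_self _
      _ ≤ ε := h2
  linarith
end

section
/- Let Y₁, Y₂ be independent random vectors in ℝⁿ whose 2n coordinates are i.i.d. standard Gaussian random variables, and let σ(x) = max(x,0) be applied componentwise. Then 𝔼‖σ(Y₁) − σ(Y₂)‖² = n·(1 − 1/π). -/
open MeasureTheory ProbabilityTheory Real Set Filter
open scoped ENNReal NNReal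

-- step 1: basic improper integrals
lemma relu_aux_int1 : ∫ x in Ioi (0:ℝ), x * rexp (-(2⁻¹:ℝ) * x^2) = 1 := by
  have A : ∀ x ∈ Ici (0:ℝ), HasDerivAt (fun x : ℝ => -rexp (-(2⁻¹:ℝ) * x^2))
      (x * rexp (-(2⁻¹:ℝ) * x^2)) x := by
    intro x _
    refine ((((hasDerivAt_pow 2 x).const_mul (-(2⁻¹:ℝ))).exp).neg).congr_deriv ?_
    simp; ring
  have B : Tendsto (fun x : ℝ => -rexp (-(2⁻¹:ℝ) * x^2)) atTop (nhds 0) := by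
    rw [show (0:ℝ) = -0 by norm_num]
    refine Tendsto.neg ?_
    apply Real.tendsto_exp_atBot.comp
    apply Tendsto.const_mul_atTop_of_neg (by norm_num : (-(2⁻¹:ℝ)) < 0)
    exact tendsto_pow_atTop (by norm_num)
  have := integral_Ioi_of_hasDerivAt_of_tendsto' A
    ((integrable_mul_exp_neg_mul_sq (by norm_num : (0:ℝ) < 2⁻¹)).integrableOn) B
  simpa using this

lemma relu_aux_int2 : ∫ x in Ioi (0:ℝ), x^2 * rexp (-(2⁻¹:ℝ) * x^2) = Real.sqrt (2*π) / 2 := by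
  have A : ∀ x ∈ Ici (0:ℝ), HasDerivAt (fun x : ℝ => -x * rexp (-(2⁻¹:ℝ) * x^2))
      (x^2 * rexp (-(2⁻¹:ℝ) * x^2) - rexp (-(2⁻¹:ℝ) * x^2)) x := by
    intro x _
    have h1 : HasDerivAt (fun x : ℝ => rexp (-(2⁻¹:ℝ) * x^2))
        (-x * rexp (-(2⁻¹:ℝ) * x^2)) x := by
      convert ((hasDerivAt_pow 2 x).const_mul (-(2⁻¹:ℝ))).exp using 1
      simp; ring
    have := (hasDerivAt_id x).neg.mul h1
    refine this.congr_deriv ?_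
    simp; ring
  have hint : IntegrableOn (fun x : ℝ =>
      x^2 * rexp (-(2⁻¹:ℝ) * x^2) - rexp (-(2⁻¹:ℝ) * x^2)) (Ioi 0) := by
    apply Integrable.sub
    · have := integrableOn_rpow_mul_exp_neg_mul_sq (by norm_num : (0:ℝ) < 2⁻¹)
        (show (-1:ℝ) < 2 by norm_num)
      refine this.congr_fun (fun x hx => ?_) measurableSet_Ioi
      simp [Real.rpow_two]
    · exact (integrable_exp_neg_mul_sq (by norm_num : (0:ℝ) < 2⁻¹)).integrableOn
  have B : Tendsto (fun x : ℝ => -x * rexp (-(2⁻¹:ℝ) * x^2)) atTop (nhds 0) := by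
    have h : Tendsto (fun x : ℝ => x * rexp (-(2⁻¹:ℝ) * x^2)) atTop (nhds 0) := by
      have hexp : Tendsto (fun x : ℝ => rexp (-(1/2) * x)) atTop (nhds 0) :=
        Real.tendsto_exp_atBot.comp
          (Tendsto.const_mul_atTop_of_neg (by norm_num : (-(1/2):ℝ) < 0) tendsto_id)
      have ho := (rpow_mul_exp_neg_mul_sq_isLittleO_exp_neg
        (by norm_num : (0:ℝ) < 2⁻¹) 1).trans_tendsto hexp
      refine ho.congr' ?_
      filter_upwards [eventually_gt_atTop (0:ℝ)] with x hx
      rw [Real.rpow_one]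
    rw [show (0:ℝ) = -0 by norm_num]
    exact (h.neg).congr (fun x => by ring)
  have := integral_Ioi_of_hasDerivAt_of_tendsto' A hint B
  have h2 : (∫ x in Ioi (0:ℝ), (x^2 * rexp (-(2⁻¹:ℝ) * x^2) - rexp (-(2⁻¹:ℝ) * x^2)))
      = (∫ x in Ioi (0:ℝ), x^2 * rexp (-(2⁻¹:ℝ) * x^2)) - ∫ x in Ioi (0:ℝ), rexp (-(2⁻¹:ℝ) * x^2) := by
    apply integral_sub
    · have := integrableOn_rpow_mul_exp_neg_mul_sq (by norm_num : (0:ℝ) < 2⁻¹)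
        (show (-1:ℝ) < 2 by norm_num)
      refine this.congr_fun (fun x hx => ?_) measurableSet_Ioi
      simp [Real.rpow_two]
    · exact (integrable_exp_neg_mul_sq (by norm_num : (0:ℝ) < 2⁻¹)).integrableOn
  have h3 : ∫ x in Ioi (0:ℝ), rexp (-(2⁻¹:ℝ) * x^2) = Real.sqrt (2*π) / 2 := by
    have := integral_gaussian_Ioi (2⁻¹:ℝ)
    rw [show (π/2⁻¹ : ℝ) = 2*π by field_simp] at this
    exact this
  rw [h2, h3] at this
  simp only [neg_zero, zero_mul, sub_zero, mul_zero] at this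
  linarith

lemma relu_gauss_density_eq : gaussianReal 0 1
    = volume.withDensity (fun x => ((gaussianPDFReal 0 1 x).toNNReal : ℝ≥0∞)) := by
  rw [gaussianReal_of_var_ne_zero 0 one_ne_zero]
  rfl

lemma relu_pdf_meas : Measurable (fun x => (gaussianPDFReal 0 1 x).toNNReal) :=
  (measurable_gaussianPDFReal 0 1).real_toNNReal

lemma relu_integral_gauss (f : ℝ → ℝ) :
    ∫ x, f x ∂(gaussianReal 0 1) = ∫ x, gaussianPDFReal 0 1 x * f x := by
  rw [relu_gauss_density_eq, integral_withDensity_eq_integral_smul relu_pdf_meas f]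
  congr 1; ext x
  rw [NNReal.smul_def, smul_eq_mul, Real.coe_toNNReal _ (gaussianPDFReal_nonneg 0 1 x)]

lemma relu_integrable_gauss_iff (f : ℝ → ℝ) (hf : AEStronglyMeasurable f (gaussianReal 0 1)) :
    Integrable f (gaussianReal 0 1) ↔ Integrable (fun x => gaussianPDFReal 0 1 x * f x) := by
  rw [relu_gauss_density_eq] at hf ⊢
  rw [integrable_withDensity_iff_integrable_coe_smul relu_pdf_meas]
  constructor <;> intro h <;> refine h.congr (ae_of_all _ fun x => ?_) <;>
    simp [NNReal.smul_def, Real.coe_toNNReal _ (gaussianPDFReal_nonneg 0 1 x)]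

lemma relu_pdf_eq (x : ℝ) : gaussianPDFReal 0 1 x = (Real.sqrt (2*π))⁻¹ * rexp (-(2⁻¹:ℝ) * x^2) := by
  unfold gaussianPDFReal
  norm_num
  left
  ring_nf

lemma relu_meas_aux : Measurable (fun y : ℝ => max y 0) := measurable_id.max measurable_const

lemma relu_moment1 : ∫ y, max y 0 ∂(gaussianReal 0 1) = (Real.sqrt (2*π))⁻¹ := by
  rw [relu_integral_gauss]
  rw [← setIntegral_eq_integral_of_forall_compl_eq_zero
    (s := Ioi (0:ℝ)) (fun x hx => by
      simp only [mem_Ioi, not_lt] at hx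
      rw [max_eq_right hx, mul_zero])]
  rw [setIntegral_congr_fun measurableSet_Ioi (g := fun x => (Real.sqrt (2*π))⁻¹ * (x * rexp (-(2⁻¹:ℝ) * x^2)))
    (fun x hx => by rw [relu_pdf_eq, max_eq_left (le_of_lt hx)]; ring)]
  rw [integral_const_mul, relu_aux_int1, mul_one]

lemma relu_moment2 : ∫ y, (max y 0)^2 ∂(gaussianReal 0 1) = 1/2 := by
  rw [relu_integral_gauss]
  rw [← setIntegral_eq_integral_of_forall_compl_eq_zero
    (s := Ioi (0:ℝ)) (fun x hx => by
      simp only [mem_Ioi, not_lt] at hx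
      rw [max_eq_right hx]; norm_num)]
  rw [setIntegral_congr_fun measurableSet_Ioi (g := fun x => (Real.sqrt (2*π))⁻¹ * (x^2 * rexp (-(2⁻¹:ℝ) * x^2)))
    (fun x hx => by rw [relu_pdf_eq, max_eq_left (le_of_lt hx)]; ring)]
  rw [integral_const_mul, relu_aux_int2]
  have h : Real.sqrt (2*π) ≠ 0 := by positivity
  field_simp

lemma relu_int_aux : Integrable (fun y : ℝ => max y 0) (gaussianReal 0 1) := by
  rw [relu_integrable_gauss_iff _ relu_meas_aux.aestronglyMeasurable]
  have hg := (integrable_mul_exp_neg_mul_sq (by norm_num : (0:ℝ) < 2⁻¹)).abs.const_mul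
    ((Real.sqrt (2*π))⁻¹)
  refine hg.mono' (((measurable_gaussianPDFReal 0 1).mul relu_meas_aux).aestronglyMeasurable)
    (ae_of_all _ fun x => ?_)
  rw [relu_pdf_eq, Real.norm_eq_abs]
  have h1 : (0:ℝ) ≤ rexp (-(2⁻¹:ℝ)*x^2) := (Real.exp_pos _).le
  have h2 : (0:ℝ) ≤ (Real.sqrt (2*π))⁻¹ := by positivity
  rw [abs_mul, abs_mul, abs_of_nonneg h2, abs_of_nonneg h1, abs_mul, abs_of_nonneg h1]
  have hm : |x ⊔ 0| ≤ |x| := by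
    rw [abs_of_nonneg (le_max_right x 0)]
    exact max_le (le_abs_self x) (abs_nonneg x)
  linarith [mul_le_mul_of_nonneg_left hm (mul_nonneg h2 h1)]

lemma relu_int_sq_aux : Integrable (fun y : ℝ => (max y 0)^2) (gaussianReal 0 1) := by
  have hmeas : Measurable (fun y : ℝ => (max y 0)^2) := relu_meas_aux.pow_const 2
  rw [relu_integrable_gauss_iff _ hmeas.aestronglyMeasurable]
  have hx2 : Integrable (fun x : ℝ => x^2 * rexp (-(2⁻¹:ℝ) * x^2)) := by
    have := integrable_rpow_mul_exp_neg_mul_sq (by norm_num : (0:ℝ) < 2⁻¹)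
      (show (-1:ℝ) < 2 by norm_num)
    simpa [Real.rpow_two] using this
  have hg := hx2.abs.const_mul ((Real.sqrt (2*π))⁻¹)
  refine hg.mono' (((measurable_gaussianPDFReal 0 1).mul hmeas).aestronglyMeasurable)
    (ae_of_all _ fun x => ?_)
  rw [relu_pdf_eq, Real.norm_eq_abs]
  have h1 : (0:ℝ) ≤ rexp (-(2⁻¹:ℝ)*x^2) := (Real.exp_pos _).le
  have h2 : (0:ℝ) ≤ (Real.sqrt (2*π))⁻¹ := by positivity
  have h3 : (0:ℝ) ≤ (x ⊔ 0)^2 := sq_nonneg _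
  rw [abs_mul, abs_mul, abs_of_nonneg h2, abs_of_nonneg h1, abs_mul, abs_of_nonneg h1,
    abs_of_nonneg h3]
  have hm : (x ⊔ 0)^2 ≤ |x^2| := by
    rw [abs_of_nonneg (sq_nonneg x), ← sq_abs x]
    have : |x ⊔ 0| ≤ |x| := by
      rw [abs_of_nonneg (le_max_right x 0)]
      exact max_le (le_abs_self x) (abs_nonneg x)
    calc (x ⊔ 0)^2 = |x ⊔ 0|^2 := by rw [sq_abs]
    _ ≤ |x|^2 := by gcongr <;> positivity
  linarith [mul_le_mul_of_nonneg_left hm (mul_nonneg h2 h1)]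


/-- Weight-randomization lemma: if the `2n` coordinates of `Y₁, Y₂` are i.i.d. standard
Gaussians, then `𝔼‖σ(Y₁) − σ(Y₂)‖² = n·(1 − 1/π)`. -/
theorem randomization_activation_distance
    {Ω : Type*} [MeasurableSpace Ω] (P : Measure Ω) [IsProbabilityMeasure P]
    {n : ℕ} (Y₁ Y₂ : Ω → EuclideanSpace ℝ (Fin n))
    (hmeas : ∀ j : Fin n ⊕ Fin n,
      Measurable (Sum.elim (fun i ω => Y₁ ω i) (fun i ω => Y₂ ω i) j))
    (hindep : iIndepFun
      (Sum.elim (fun i ω => Y₁ ω i) (fun i ω => Y₂ ω i)) P)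
    (hlaw : ∀ j : Fin n ⊕ Fin n,
      P.map (Sum.elim (fun i ω => Y₁ ω i) (fun i ω => Y₂ ω i) j) = gaussianReal 0 1) :
    ∫ ω, ‖reluVec (Y₁ ω) - reluVec (Y₂ ω)‖ ^ 2 ∂P = n * (1 - 1 / Real.pi) := by
  set g := Sum.elim (fun i ω => Y₁ ω i) (fun i ω => Y₂ ω i) with hgdef
  have hInt1 : ∀ j, Integrable (fun ω => max (g j ω) 0) P := by
    intro j
    have h := relu_int_aux
    rw [← hlaw j, integrable_map_measure relu_meas_aux.aestronglyMeasurable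
      (hmeas j).aemeasurable] at h
    exact h
  have hInt2 : ∀ j, Integrable (fun ω => (max (g j ω) 0)^2) P := by
    intro j
    have h := relu_int_sq_aux
    rw [← hlaw j, integrable_map_measure (relu_meas_aux.pow_const 2).aestronglyMeasurable
      (hmeas j).aemeasurable] at h
    exact h
  have hE1 : ∀ j, ∫ ω, max (g j ω) 0 ∂P = (Real.sqrt (2*π))⁻¹ := by
    intro j
    have h := relu_moment1
    rw [← hlaw j, integral_map (hmeas j).aemeasurable relu_meas_aux.aestronglyMeasurable] at h
    exact h
  have hE2 : ∀ j, ∫ ω, (max (g j ω) 0)^2 ∂P = 1/2 := by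
    intro j
    have h := relu_moment2
    rw [← hlaw j, integral_map (hmeas j).aemeasurable
      (relu_meas_aux.pow_const 2).aestronglyMeasurable] at h
    exact h
  have hIndep : ∀ i : Fin n, IndepFun (fun ω => max (g (Sum.inl i) ω) 0)
      (fun ω => max (g (Sum.inr i) ω) 0) P := fun i =>
    (hindep.indepFun (by simp)).comp relu_meas_aux relu_meas_aux
  have hIntProd : ∀ i : Fin n, Integrable
      (fun ω => (max (g (Sum.inl i) ω) 0) * (max (g (Sum.inr i) ω) 0)) P := fun i =>
    (hIndep i).integrable_mul (hInt1 _) (hInt1 _)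
  have hEProd : ∀ i : Fin n, ∫ ω, (max (g (Sum.inl i) ω) 0) * (max (g (Sum.inr i) ω) 0) ∂P
      = (Real.sqrt (2*π))⁻¹ * (Real.sqrt (2*π))⁻¹ := by
    intro i
    have h := (hIndep i).integral_fun_mul_eq_mul_integral (hInt1 _).aestronglyMeasurable (hInt1 _).aestronglyMeasurable
    rw [hE1, hE1] at h
    exact h
  have hIntCoord : ∀ i : Fin n, Integrable
      (fun ω => (max (Y₁ ω i) 0 - max (Y₂ ω i) 0)^2) P := by
    intro i
    have hf : Integrable (fun ω =>
        (max (g (Sum.inl i) ω) 0)^2 + (max (g (Sum.inr i) ω) 0)^2) P :=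
      (hInt2 (Sum.inl i)).add (hInt2 (Sum.inr i))
    have hg2 : Integrable (fun ω =>
        2 * ((max (g (Sum.inl i) ω) 0) * (max (g (Sum.inr i) ω) 0))) P :=
      (hIntProd i).const_mul 2
    refine (hf.sub hg2).congr (ae_of_all _ fun ω => ?_)
    simp only [hgdef, Sum.elim_inl, Sum.elim_inr, Pi.sub_apply]
    ring
  have hcoord : ∀ i : Fin n,
      ∫ ω, (max (Y₁ ω i) 0 - max (Y₂ ω i) 0)^2 ∂P = 1 - 1/π := by
    intro i
    have hf : Integrable (fun ω =>
        (max (g (Sum.inl i) ω) 0)^2 + (max (g (Sum.inr i) ω) 0)^2) P :=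
      (hInt2 (Sum.inl i)).add (hInt2 (Sum.inr i))
    have hg2 : Integrable (fun ω =>
        2 * ((max (g (Sum.inl i) ω) 0) * (max (g (Sum.inr i) ω) 0))) P :=
      (hIntProd i).const_mul 2
    have expand : (fun ω => (max (Y₁ ω i) 0 - max (Y₂ ω i) 0)^2)
        = fun ω => ((max (g (Sum.inl i) ω) 0)^2 + (max (g (Sum.inr i) ω) 0)^2)
          - 2 * ((max (g (Sum.inl i) ω) 0) * (max (g (Sum.inr i) ω) 0)) := by
      funext ω
      simp only [hgdef, Sum.elim_inl, Sum.elim_inr]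
      ring
    rw [expand, integral_sub hf hg2,
      integral_add (hInt2 _) (hInt2 _), integral_const_mul 2, hE2, hE2, hEProd]
    have hs : (Real.sqrt (2*π))⁻¹ * (Real.sqrt (2*π))⁻¹ = (2*π)⁻¹ := by
      rw [← mul_inv, Real.mul_self_sqrt (by positivity)]
    rw [hs]
    have hπ : (π:ℝ) ≠ 0 := Real.pi_ne_zero
    field_simp
    ring
  have hnorm : ∀ ω, ‖reluVec (Y₁ ω) - reluVec (Y₂ ω)‖ ^ 2
      = ∑ i : Fin n, (max (Y₁ ω i) 0 - max (Y₂ ω i) 0)^2 := by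
    intro ω
    rw [PiLp.norm_sq_eq_of_L2]
    refine Finset.sum_congr rfl fun i _ => ?_
    rw [Real.norm_eq_abs, sq_abs]
    rfl
  simp_rw [hnorm]
  rw [integral_finset_sum _ (fun i _ => hIntCoord i)]
  simp_rw [fun i : Fin n => hcoord i]
  simp [Finset.card_univ, mul_comm]; ring
end

section
/- Let ψ : ℝ → ℝ and suppose there exist a, b, c ∈ ℝ with a·b ≠ 0 such that a·ψ(x) + b·ψ(−x) = c for all x ∈ ℝ. Let ℓ₁ : ℝᵐ → ℝⁿ and ℓ₂ : ℝⁿ → ℝᵖ be affine maps, and let Ψ : ℝⁿ → ℝⁿ denote componentwise application of ψ. Then there exists an affine map ℓ₂' : ℝⁿ → ℝᵖ such that ℓ₂ ∘ Ψ ∘ ℓ₁ = ℓ₂' ∘ Ψ ∘ (−ℓ₁), where −ℓ₁ is the affine map x ↦ −ℓ₁(x). -/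
/-- Affine-compensation lemma (Lemma 10): if `ψ` satisfies `a·ψ(x) + b·ψ(−x) = c` with
`ab ≠ 0`, then for affine layers `ℓ₁, ℓ₂` there is an affine layer `ℓ₂'` with
`ℓ₂ ∘ Ψ ∘ ℓ₁ = ℓ₂' ∘ Ψ ∘ (−ℓ₁)`, where `Ψ` applies `ψ` componentwise. -/
theorem affine_compensation_of_negation
    (ψ : ℝ → ℝ) (a b c : ℝ) (hab : a * b ≠ 0)
    (hψ : ∀ x : ℝ, a * ψ x + b * ψ (-x) = c)
    {m n p : ℕ}
    (ℓ₁ : (Fin m → ℝ) →ᵃ[ℝ] (Fin n → ℝ)) (ℓ₂ : (Fin n → ℝ) →ᵃ[ℝ] (Fin p → ℝ)) :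
    ∃ ℓ₂' : (Fin n → ℝ) →ᵃ[ℝ] (Fin p → ℝ),
      ∀ x : Fin m → ℝ,
        ℓ₂ (fun i => ψ (ℓ₁ x i)) = ℓ₂' (fun i => ψ ((-ℓ₁) x i)) := by
  have ha : a ≠ 0 := fun h => hab (by simp [h])
  set g : (Fin n → ℝ) →ᵃ[ℝ] (Fin n → ℝ) :=
    (-(b/a)) • (LinearMap.id : (Fin n → ℝ) →ₗ[ℝ] (Fin n → ℝ)).toAffineMap
      + AffineMap.const ℝ (Fin n → ℝ) (fun _ => c / a) with hg
  refine ⟨ℓ₂.comp g, fun x => ?_⟩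
  have hgz : ∀ z : Fin n → ℝ, g z = fun i => -(b/a) * z i + c/a := by
    intro z; funext i
    simp [hg, Pi.add_apply, Pi.smul_apply, smul_eq_mul]
  rw [AffineMap.comp_apply, hgz]
  congr 1
  funext i
  have h := hψ (ℓ₁ x i)
  have : (-ℓ₁) x i = -(ℓ₁ x i) := by simp
  rw [this]
  have h2 : -(b/a) * ψ (-(ℓ₁ x i)) + c/a = (c - b * ψ (-(ℓ₁ x i)))/a := by ring
  rw [h2, eq_div_iff ha]
  linarith
end

section
/- Let E be a real inner product space, let L : E → ℝ be continuously differentiable with gradient ∇L, let θ : [0,∞) → E solve the gradient flow θ'(t) = −∇L(θ(t)) for all t ≥ 0, and let δ : E → ℝ be Lipschitz with constant K. Then for every t ≥ 0, |δ(θ(t)) − δ(θ(0))| ≤ K · √(t · (L(θ(0)) − L(θ(t)))); in particular, |δ(θ(t)) − δ(θ(0))| ≤ K · √(t · (L(θ(0)) − infₛ L(θ(s)))) for all t, so the change in δ achievable by gradient-flow fine-tuning up to time t is bounded in terms of the available loss decrease. -/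
open MeasureTheory intervalIntegral

/-- Theorem 1 in the form used in the paper: along a gradient flow of `L`, the change of a
`K`-Lipschitz functional `δ` up to time `t` is bounded by `K·√(t·(L(θ 0) − L(θ t)))`, and in
particular by `K·√(t·(L(θ 0) − inf_{s ≥ 0} L(θ s)))` (the available loss decrease). -/
theorem loss_gap_change_bound
    {E : Type*} [NormedAddCommGroup E] [InnerProductSpace ℝ E] [CompleteSpace E]
    (L : E → ℝ) (hL : ContDiff ℝ 1 L)
    (θ : ℝ → E) (hθ : ∀ t, 0 ≤ t → HasDerivAt θ (-(gradient L (θ t))) t)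
    (δ : E → ℝ) (K : ℝ) (hK : 0 ≤ K)
    (hδ : ∀ x y, |δ x - δ y| ≤ K * ‖x - y‖)
    (hbdd : BddBelow (Set.range fun s : {s : ℝ // 0 ≤ s} => L (θ s.1))) :
    ∀ t, 0 ≤ t →
      |δ (θ t) - δ (θ 0)| ≤ K * Real.sqrt (t * (L (θ 0) - L (θ t))) ∧
        |δ (θ t) - δ (θ 0)|
          ≤ K * Real.sqrt (t * (L (θ 0) - ⨅ s : {s : ℝ // 0 ≤ s}, L (θ s.1))) := by
  -- gradient is continuous
  have hgradc : Continuous (gradient L) := by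
    have h1 : Continuous (fderiv ℝ L) := hL.continuous_fderiv one_ne_zero
    exact (InnerProductSpace.toDual ℝ E).symm.continuous.comp h1
  have hθc : ∀ s : ℝ, 0 ≤ s → ContinuousAt θ s := fun s hs => (hθ s hs).continuousAt
  -- derivative of L ∘ θ
  have hg : ∀ s : ℝ, 0 ≤ s →
      HasDerivAt (fun u => L (θ u)) (-‖gradient L (θ s)‖ ^ 2) s := by
    intro s hs
    have hd : DifferentiableAt ℝ L (θ s) := (hL.differentiable one_ne_zero).differentiableAt
    have hgr := hd.hasGradientAt
    have hF : HasFDerivAt L (InnerProductSpace.toDual ℝ E (gradient L (θ s))) (θ s) :=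
      hgr.hasFDerivAt
    have := hF.comp_hasDerivAt s (hθ s hs)
    convert this using 1
    rotate_right
    rw [InnerProductSpace.toDual_apply_apply, inner_neg_right,
      real_inner_self_eq_norm_sq]
    all_goals rfl
  intro t ht
  set A : ℝ := L (θ 0) - L (θ t) with hA
  have hθcont : ContinuousOn θ (Set.Icc 0 t) := fun s hs =>
    (hθc s hs.1).continuousWithinAt
  have hhc : ContinuousOn (fun s => ‖gradient L (θ s)‖) (Set.Icc 0 t) :=
    (hgradc.comp_continuousOn hθcont).norm
  have huIcc : Set.uIcc 0 t = Set.Icc 0 t := Set.uIcc_of_le ht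
  -- FTC for L ∘ θ
  have hint2 : IntervalIntegrable (fun s => -‖gradient L (θ s)‖ ^ 2) volume 0 t := by
    apply ContinuousOn.intervalIntegrable
    rw [huIcc]
    exact ((hhc.pow 2).neg)
  have hFTC : ∫ s in (0)..t, -‖gradient L (θ s)‖ ^ 2 = L (θ t) - L (θ 0) := by
    apply intervalIntegral.integral_eq_sub_of_hasDerivAt
    · intro s hs
      rw [huIcc] at hs
      exact hg s hs.1
    · exact hint2
  have hAint : ∫ s in (0)..t, ‖gradient L (θ s)‖ ^ 2 = A := by
    have := hFTC
    rw [intervalIntegral.integral_neg] at this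
    linarith
  have hAnn : 0 ≤ A := by
    rw [← hAint]
    exact intervalIntegral.integral_nonneg ht (fun s _ => sq_nonneg _)
  -- FTC for θ
  have hintθ : IntervalIntegrable (fun s => -(gradient L (θ s))) volume 0 t := by
    apply ContinuousOn.intervalIntegrable
    rw [huIcc]
    exact (hgradc.comp_continuousOn hθcont).neg
  have hθFTC : ∫ s in (0)..t, -(gradient L (θ s)) = θ t - θ 0 := by
    apply intervalIntegral.integral_eq_sub_of_hasDerivAt
    · intro s hs
      rw [huIcc] at hs
      exact hθ s hs.1
    · exact hintθ
  set B : ℝ := ∫ s in (0)..t, ‖gradient L (θ s)‖ with hB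
  have hBnn : 0 ≤ B :=
    intervalIntegral.integral_nonneg ht (fun s _ => norm_nonneg _)
  have hnorm : ‖θ t - θ 0‖ ≤ B := by
    rw [← hθFTC]
    calc ‖∫ s in (0)..t, -(gradient L (θ s))‖
        ≤ ∫ s in (0)..t, ‖-(gradient L (θ s))‖ :=
          intervalIntegral.norm_integral_le_integral_norm ht
      _ = B := by simp [hB]
  have hinth : IntervalIntegrable (fun s => ‖gradient L (θ s)‖) volume 0 t := by
    apply ContinuousOn.intervalIntegrable; rw [huIcc]; exact hhc
  have hinth2 : IntervalIntegrable (fun s => ‖gradient L (θ s)‖ ^ 2) volume 0 t := by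
    apply ContinuousOn.intervalIntegrable; rw [huIcc]; exact hhc.pow 2
  -- Cauchy-Schwarz via AM-GM trick: for all ε > 0, B ≤ (ε A + t/ε)/2
  have key : ∀ ε : ℝ, 0 < ε → B ≤ (ε * A + t / ε) / 2 := by
    intro ε hε
    have hmono : B ≤ ∫ s in (0)..t, (ε * ‖gradient L (θ s)‖ ^ 2 + 1 / ε) / 2 := by
      apply intervalIntegral.integral_mono_on ht hinth
      · exact ((hinth2.const_mul ε).add (intervalIntegrable_const)).div_const 2
      · intro s _
        have h1 : ε * (1 / ε) = 1 := by field_simp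
        nlinarith [sq_nonneg (ε * ‖gradient L (θ s)‖ - 1), norm_nonneg (gradient L (θ s)),
          mul_pos hε hε, hε]
    calc B ≤ ∫ s in (0)..t, (ε * ‖gradient L (θ s)‖ ^ 2 + 1 / ε) / 2 := hmono
      _ = (ε * A + t / ε) / 2 := by
          rw [intervalIntegral.integral_div, intervalIntegral.integral_add
            (hinth2.const_mul ε) intervalIntegrable_const,
            intervalIntegral.integral_const_mul, hAint, intervalIntegral.integral_const]
          simp only [smul_eq_mul]
          ring_nf
  have hBle : B ≤ Real.sqrt (t * A) := by
    rcases eq_or_lt_of_le hAnn with hA0 | hApos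
    · -- A = 0 : B ≤ t/(2ε) for all ε > 0 ⇒ B ≤ 0
      have hB0 : B ≤ 0 := by
        by_contra h
        push_neg at h
        have := key (t / B + 1) (by positivity)
        rw [← hA0] at this
        have hc : B * (t / B + 1) = t + B := by field_simp
        have h2 : t / (t / B + 1) < B := by
          rw [div_lt_iff₀ (by positivity)]
          linarith
        linarith
      have : Real.sqrt (t * A) ≥ 0 := Real.sqrt_nonneg _
      linarith
    · have hsA : 0 < Real.sqrt A := Real.sqrt_pos.mpr hApos
      rcases eq_or_lt_of_le ht with ht0 | htpos
      · -- t = 0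
        have : B = 0 := by
          rw [hB, ← ht0, intervalIntegral.integral_same]
        rw [this]
        exact Real.sqrt_nonneg _
      · have hst : 0 < Real.sqrt t := Real.sqrt_pos.mpr htpos
        have := key (Real.sqrt t / Real.sqrt A) (by positivity)
        have hsq : Real.sqrt t ^ 2 = t := Real.sq_sqrt ht
        have hsqA : Real.sqrt A ^ 2 = A := Real.sq_sqrt hAnn
        have hexp : (Real.sqrt t / Real.sqrt A) * A + t / (Real.sqrt t / Real.sqrt A)
            = 2 * Real.sqrt (t * A) := by
          rw [Real.sqrt_mul ht]
          field_simp
          nlinarith [hsq, hsqA]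
        rw [hexp] at this
        linarith
  -- combine
  have hmain : |δ (θ t) - δ (θ 0)| ≤ K * Real.sqrt (t * A) := by
    calc |δ (θ t) - δ (θ 0)| ≤ K * ‖θ t - θ 0‖ := hδ _ _
      _ ≤ K * B := by nlinarith [hnorm]
      _ ≤ K * Real.sqrt (t * A) := by nlinarith [hBle]
  refine ⟨hmain, ?_⟩
  have hinf : (⨅ s : {s : ℝ // 0 ≤ s}, L (θ s.1)) ≤ L (θ t) :=
    ciInf_le hbdd ⟨t, ht⟩
  calc |δ (θ t) - δ (θ 0)| ≤ K * Real.sqrt (t * A) := hmain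
    _ ≤ K * Real.sqrt (t * (L (θ 0) - ⨅ s : {s : ℝ // 0 ≤ s}, L (θ s.1))) := by
        apply mul_le_mul_of_nonneg_left _ hK
        apply Real.sqrt_le_sqrt
        nlinarith [hinf]
end
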